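/- Descent of the quadratic-rig objective under the proposed surrogate: Let B ∈ ℝ^{3n×m} with rows B_i, let D^(1), …, D^(3n) ∈ ℝ^{m×m} be symmetric, let b̂ ∈ ℝ^{3n}, and let α ≥ 0. Define F(u) := ∑_{i=1}^{3n} (B_i u + uᵀ D^(i) u − b̂_i)² + α ∑_{j=1}^m u_j. Let w ∈ [0,1]^m and let ψ(v) := ∑_{i=1}^{3n} ψ_i(v) + α ∑_{j=1}^m (w_j + v_j) be the surrogate built from w as in Proposition 2. If v* minimizes ψ over the set {v ∈ ℝ^m : 0 ≤ w + v ≤ 1} (entrywise), then F(w + v*) ≤ F(w). -/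

import Mathlib

/-- The smallest eigenvalue of a real symmetric (Hermitian) matrix. -/
noncomputable def lamMin {m : ℕ} {D : Matrix (Fin m) (Fin m) ℝ} (hD : D.IsHermitian) : ℝ :=
  ⨅ i, hD.eigenvalues i

/-- The largest eigenvalue of a real symmetric (Hermitian) matrix. -/
noncomputable def lamMax {m : ℕ} {D : Matrix (Fin m) (Fin m) ℝ} (hD : D.IsHermitian) : ℝ :=
  ⨆ i, hD.eigenvalues i

/-- `λ_M(D, g)`: the smallest eigenvalue if `g < 0`, the largest if `g ≥ 0`. -/
noncomputable def lamM {m : ℕ} {D : Matrix (Fin m) (Fin m) ℝ} (hD : D.IsHermitian)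
    (g : ℝ) : ℝ :=
  if g < 0 then lamMin hD else lamMax hD

/-- `σ(D)`: the largest singular value of `D`, i.e. the operator norm of `D`
with respect to the Euclidean norm. -/
noncomputable def sigmaOp {m : ℕ} (D : Matrix (Fin m) (Fin m) ℝ) : ℝ :=
  ‖Matrix.toEuclideanCLM (𝕜 := ℝ) D‖

section Helpers
open Matrix

variable {m : ℕ} {D : Matrix (Fin m) (Fin m) ℝ}

lemma aux_transpose_eq (hD : D.IsHermitian) : Dᵀ = D := by
  ext i j
  have := congrFun (congrFun hD i) j
  simpa using this

lemma aux_dot_symm (hD : D.IsHermitian) (x y : Fin m → ℝ) :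
    dotProduct x (D.mulVec y) = dotProduct y (D.mulVec x) := by
  rw [Matrix.dotProduct_mulVec]
  nth_rewrite 1 [← aux_transpose_eq hD]
  rw [Matrix.vecMul_transpose, dotProduct_comm]

lemma aux_quad_eq (hD : D.IsHermitian) (v : EuclideanSpace ℝ (Fin m)) :
    dotProduct v (D.mulVec v)
      = ∑ j, hD.eigenvalues j * (inner ℝ v (hD.eigenvectorBasis j) : ℝ)^2 := by
  set b := hD.eigenvectorBasis with hb
  have hX : ∀ x : EuclideanSpace ℝ (Fin m), ∀ y : EuclideanSpace ℝ (Fin m),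
      dotProduct (x : Fin m → ℝ) (y : Fin m → ℝ) = (inner ℝ x y : ℝ) := by
    intro x y
    simp [PiLp.inner_apply, RCLike.inner_apply, dotProduct, mul_comm]
  have key : dotProduct (v : Fin m → ℝ) (D.mulVec v)
      = (inner ℝ v (WithLp.toLp 2 (D.mulVec v)) : ℝ) := hX v (WithLp.toLp 2 (D.mulVec v))
  rw [key, ← OrthonormalBasis.sum_inner_mul_inner b]
  refine Finset.sum_congr rfl fun j _ => ?_
  have h3 : D *ᵥ ⇑(b j) = hD.eigenvalues j • ⇑(b j) := by
    have := hD.mulVec_eigenvectorBasis j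
    simpa using this
  have hBX : (inner ℝ (b j) (WithLp.toLp 2 (D.mulVec v)) : ℝ)
      = hD.eigenvalues j * (inner ℝ (b j) v : ℝ) := by
    rw [← hX, ← hX]
    show (⇑(b j) : Fin m → ℝ) ⬝ᵥ (D *ᵥ v) = hD.eigenvalues j * ((⇑(b j) : Fin m → ℝ) ⬝ᵥ v)
    rw [Matrix.dotProduct_mulVec]
    nth_rewrite 1 [← aux_transpose_eq hD]
    rw [Matrix.vecMul_transpose, h3, smul_dotProduct, smul_eq_mul]
  rw [hBX, real_inner_comm (b j) v]
  ring

lemma aux_sum_inner_sq (v : EuclideanSpace ℝ (Fin m))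
    (b : OrthonormalBasis (Fin m) ℝ (EuclideanSpace ℝ (Fin m))) :
    ∑ j, (inner ℝ v (b j) : ℝ)^2 = ‖v‖^2 := by
  have := b.sum_inner_mul_inner v v
  rw [real_inner_self_eq_norm_sq] at this
  rw [← this]
  refine Finset.sum_congr rfl fun j _ => ?_
  rw [real_inner_comm (b j) v]; ring

lemma aux_quad_le_lamMax (hD : D.IsHermitian) (v : EuclideanSpace ℝ (Fin m)) :
    dotProduct v (D.mulVec v) ≤ lamMax hD * ‖v‖^2 := by
  rw [aux_quad_eq hD v, ← aux_sum_inner_sq v hD.eigenvectorBasis, Finset.mul_sum]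
  refine Finset.sum_le_sum fun j _ => ?_
  have hle : hD.eigenvalues j ≤ lamMax hD :=
    le_ciSup (Set.Finite.bddAbove (Set.finite_range _)) j
  exact mul_le_mul_of_nonneg_right hle (sq_nonneg _)

lemma aux_lamMin_le_quad (hD : D.IsHermitian) (v : EuclideanSpace ℝ (Fin m)) :
    lamMin hD * ‖v‖^2 ≤ dotProduct v (D.mulVec v) := by
  rw [aux_quad_eq hD v, ← aux_sum_inner_sq v hD.eigenvectorBasis, Finset.mul_sum]
  refine Finset.sum_le_sum fun j _ => ?_
  have hle : lamMin hD ≤ hD.eigenvalues j :=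
    ciInf_le (Set.Finite.bddBelow (Set.finite_range _)) j
  exact mul_le_mul_of_nonneg_right hle (sq_nonneg _)

lemma aux_abs_quad_le (D : Matrix (Fin m) (Fin m) ℝ) (v : EuclideanSpace ℝ (Fin m)) :
    |dotProduct v (D.mulVec v)| ≤ sigmaOp D * ‖v‖^2 := by
  have hXv : ⇑(Matrix.toEuclideanCLM (𝕜 := ℝ) D v) = D.mulVec v := rfl
  have h1 : dotProduct (v : Fin m → ℝ) (D.mulVec v)
      = (inner ℝ v (Matrix.toEuclideanCLM (𝕜 := ℝ) D v) : ℝ) := by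
    simp only [PiLp.inner_apply, RCLike.inner_apply, conj_trivial, dotProduct]
    exact Finset.sum_congr rfl fun x _ => mul_comm _ _
  rw [h1]
  calc |(inner ℝ v (Matrix.toEuclideanCLM (𝕜 := ℝ) D v) : ℝ)|
      ≤ ‖v‖ * ‖Matrix.toEuclideanCLM (𝕜 := ℝ) D v‖ := abs_real_inner_le_norm _ _
    _ ≤ ‖v‖ * (sigmaOp D * ‖v‖) := by
        gcongr
        exact (Matrix.toEuclideanCLM (𝕜 := ℝ) D).le_opNorm v
    _ = sigmaOp D * ‖v‖^2 := by ring

lemma aux_sum_sq_eq_norm (v : EuclideanSpace ℝ (Fin m)) : ∑ j, (v j)^2 = ‖v‖^2 := by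
  rw [EuclideanSpace.norm_eq, Real.sq_sqrt (Finset.sum_nonneg fun _ _ => sq_nonneg _)]
  simp [Real.norm_eq_abs, sq_abs]

end Helpers

set_option maxHeartbeats 2000000 in
/-- Descent of the quadratic-rig objective under the proposed surrogate. -/
theorem surrogate_minimizer_descent {n m : ℕ} (B : Matrix (Fin (3 * n)) (Fin m) ℝ)
    (D : Fin (3 * n) → Matrix (Fin m) (Fin m) ℝ) (hD : ∀ i, (D i).IsHermitian)
    (bhat : Fin (3 * n) → ℝ) (α : ℝ) (hα : 0 ≤ α)
    (w : EuclideanSpace ℝ (Fin m)) (hw : ∀ j, 0 ≤ w j ∧ w j ≤ 1)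
    (vstar : EuclideanSpace ℝ (Fin m)) :
    let F : EuclideanSpace ℝ (Fin m) → ℝ := fun u =>
      (∑ i, (dotProduct (B i) u + dotProduct u ((D i).mulVec u) - bhat i) ^ 2)
        + α * ∑ j, u j
    let g : Fin (3 * n) → ℝ := fun i =>
      dotProduct (B i) w + dotProduct w ((D i).mulVec w) - bhat i
    let h : Fin (3 * n) → EuclideanSpace ℝ (Fin m) := fun i =>
      WithLp.toLp 2 (fun j => B i j + 2 * Matrix.vecMul w (D i) j : Fin m → ℝ)
    let ψ : EuclideanSpace ℝ (Fin m) → ℝ := fun v =>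
      (∑ i, (g i ^ 2 + 2 * g i * ∑ j, h i j * v j
        + 2 * (g i * lamM (hD i) (g i) + ‖h i‖ ^ 2) * ∑ j, v j ^ 2
        + 2 * m * sigmaOp (D i) ^ 2 * ∑ j, v j ^ 4))
        + α * ∑ j, (w j + v j)
    (∀ j, 0 ≤ w j + vstar j ∧ w j + vstar j ≤ 1) →
    (∀ v : EuclideanSpace ℝ (Fin m),
      (∀ j, 0 ≤ w j + v j ∧ w j + v j ≤ 1) → ψ vstar ≤ ψ v) →
    F (w + vstar) ≤ F w := by
  intro F g h ψ hfeas hmin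
  -- ψ vstar ≤ ψ 0 = F w
  have h0feas : ∀ j, 0 ≤ w j + (0 : EuclideanSpace ℝ (Fin m)) j ∧
      w j + (0 : EuclideanSpace ℝ (Fin m)) j ≤ 1 := by
    intro j
    simpa using hw j
  have hψ0 : ψ vstar ≤ ψ 0 := hmin 0 h0feas
  have hψ0eq : ψ (0 : EuclideanSpace ℝ (Fin m)) = F w := by
    show (∑ i, (g i ^ 2 + 2 * g i * ∑ j, h i j * (0 : EuclideanSpace ℝ (Fin m)) j
        + 2 * (g i * lamM (hD i) (g i) + ‖h i‖ ^ 2) * ∑ j, ((0 : EuclideanSpace ℝ (Fin m)) j) ^ 2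
        + 2 * m * sigmaOp (D i) ^ 2 * ∑ j, ((0 : EuclideanSpace ℝ (Fin m)) j) ^ 4))
        + α * ∑ j, (w j + (0 : EuclideanSpace ℝ (Fin m)) j)
      = (∑ i, (g i) ^ 2) + α * ∑ j, w j
    simp
  -- Majorization: F (w + vstar) ≤ ψ vstar
  have hmaj : F (w + vstar) ≤ ψ vstar := by
    have hterm : ∀ i, (dotProduct (B i) (w + vstar)
        + dotProduct (w + vstar) ((D i).mulVec (w + vstar)) - bhat i) ^ 2
        ≤ g i ^ 2 + 2 * g i * ∑ j, h i j * vstar j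
          + 2 * (g i * lamM (hD i) (g i) + ‖h i‖ ^ 2) * ∑ j, vstar j ^ 2
          + 2 * m * sigmaOp (D i) ^ 2 * ∑ j, vstar j ^ 4 := by
      intro i
      set G := g i with hG
      set A := ∑ j, h i j * vstar j with hA
      set C := dotProduct (vstar : Fin m → ℝ) ((D i).mulVec vstar) with hC
      set S2 := ∑ j, (vstar j) ^ 2 with hS2
      set S4 := ∑ j, (vstar j) ^ 4 with hS4
      have hS2norm : S2 = ‖vstar‖ ^ 2 := aux_sum_sq_eq_norm vstar
      have hS2nonneg : (0:ℝ) ≤ S2 := by rw [hS2norm]; positivity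
      -- the affected value equals G + A + C
      have hwv : ((w + vstar : EuclideanSpace ℝ (Fin m)) : Fin m → ℝ)
          = (w : Fin m → ℝ) + (vstar : Fin m → ℝ) := rfl
      have hAeq : A = dotProduct (B i) (vstar : Fin m → ℝ)
          + 2 * dotProduct (w : Fin m → ℝ) ((D i).mulVec vstar) := by
        rw [hA, Matrix.dotProduct_mulVec]
        simp only [dotProduct, Finset.mul_sum, ← Finset.sum_add_distrib]
        refine Finset.sum_congr rfl fun j _ => ?_
        show (B i j + 2 * Matrix.vecMul w (D i) j) * vstar j = _
        ring
      have key1 : dotProduct (B i) (w + vstar)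
          + dotProduct (w + vstar) ((D i).mulVec (w + vstar)) - bhat i
          = G + A + C := by
        rw [hwv, Matrix.mulVec_add ..]
        rw [dotProduct_add, add_dotProduct, dotProduct_add,
          dotProduct_add]
        have hswap : dotProduct (vstar : Fin m → ℝ) ((D i).mulVec w)
            = dotProduct (w : Fin m → ℝ) ((D i).mulVec vstar) :=
          aux_dot_symm (hD i) _ _
        rw [hswap, hAeq, hG]
        show _ = (dotProduct (B i) w + dotProduct (w : Fin m → ℝ)
          ((D i).mulVec w) - bhat i) + _ + _
        ring
      rw [key1]
      -- bounds
      have hGC : G * C ≤ G * (lamM (hD i) G * S2) := by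
        rw [lamM]
        by_cases hGneg : G < 0
        · rw [if_pos hGneg]
          have := aux_lamMin_le_quad (hD i) vstar
          rw [← hS2norm] at this
          rw [← hC] at this
          nlinarith
        · rw [if_neg hGneg]
          push_neg at hGneg
          have := aux_quad_le_lamMax (hD i) vstar
          rw [← hS2norm] at this
          rw [← hC] at this
          nlinarith
      have hA2 : A ^ 2 ≤ ‖h i‖ ^ 2 * S2 := by
        have hAinner : A = (inner ℝ (h i) vstar : ℝ) := by
          rw [hA]
          simp [PiLp.inner_apply, RCLike.inner_apply, mul_comm]
        rw [hAinner, hS2norm]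
        have := real_inner_mul_inner_self_le (h i) vstar
        rw [real_inner_self_eq_norm_sq, real_inner_self_eq_norm_sq] at this
        nlinarith
      have hC2 : C ^ 2 ≤ sigmaOp (D i) ^ 2 * S2 ^ 2 := by
        have habs := aux_abs_quad_le (D i) vstar
        rw [← hS2norm, ← hC] at habs
        have h1 : |C| ^ 2 ≤ (sigmaOp (D i) * S2) ^ 2 := by
          have : (0:ℝ) ≤ |C| := abs_nonneg _
          nlinarith
        rw [sq_abs] at h1
        nlinarith
      have hS24 : S2 ^ 2 ≤ m * S4 := by
        rw [hS2, hS4]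
        have := sq_sum_le_card_mul_sum_sq (s := Finset.univ) (f := fun j => (vstar j) ^ 2)
        simpa [← pow_mul] using this
      have hσ2 : (0:ℝ) ≤ sigmaOp (D i) ^ 2 := sq_nonneg _
      have hC2' : C ^ 2 ≤ sigmaOp (D i) ^ 2 * (m * S4) := by
        calc C ^ 2 ≤ sigmaOp (D i) ^ 2 * S2 ^ 2 := hC2
          _ ≤ sigmaOp (D i) ^ 2 * (m * S4) := by
              exact mul_le_mul_of_nonneg_left hS24 hσ2
      nlinarith [sq_nonneg (A - C), sq_nonneg (A + C)]
    show (∑ i, (dotProduct (B i) (w + vstar)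
        + dotProduct (w + vstar) ((D i).mulVec (w + vstar)) - bhat i) ^ 2)
        + α * ∑ j, (w + vstar) j
      ≤ (∑ i, (g i ^ 2 + 2 * g i * ∑ j, h i j * vstar j
        + 2 * (g i * lamM (hD i) (g i) + ‖h i‖ ^ 2) * ∑ j, vstar j ^ 2
        + 2 * m * sigmaOp (D i) ^ 2 * ∑ j, vstar j ^ 4))
        + α * ∑ j, (w j + vstar j)
    have hαeq : α * ∑ j, (w + vstar) j = α * ∑ j, (w j + vstar j) := rfl
    rw [hαeq]
    exact add_le_add_left (Finset.sum_le_sum fun i _ => hterm i) _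
  calc F (w + vstar) ≤ ψ vstar := hmaj
    _ ≤ ψ 0 := hψ0
    _ = F w := hψ0eq
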